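/- arXiv:0807.1958 — 2 statements merged into one kernel-verified Lean document; each statement's English description precedes it below -/
import Mathlib

section
/- Let A and B be m×m complex matrices each having all eigenspaces one-dimensional, and suppose there exists a basis in which A is upper-triangular and B is lower-triangular (with fixed orderings of diagonal entries). Then such a basis is unique up to an invertible diagonal transformation: if g, h ∈ GL(m,ℂ) both satisfy g⁻¹Ag upper-triangular with the given diagonal order and g⁻¹Bg lower-triangular with the given diagonal order (and similarly for h), and A and B are diagonalizable, then g⁻¹h is diagonal. -/
def OneDimEig {m : ℕ} (A : Matrix (Fin m) (Fin m) ℂ) : Prop :=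
  ∀ μ : ℂ, LinearMap.ker (Matrix.toLin' (A - μ • 1)) ≠ ⊥ →
    Module.finrank ℂ (LinearMap.ker (Matrix.toLin' (A - μ • 1))) = 1

def IsUpper {m : ℕ} (A : Matrix (Fin m) (Fin m) ℂ) : Prop :=
  ∀ i j : Fin m, j < i → A i j = 0

def IsLower {m : ℕ} (A : Matrix (Fin m) (Fin m) ℂ) : Prop :=
  ∀ i j : Fin m, i < j → A i j = 0

open Matrix Polynomial in
/-- Conjugation by a unit preserves the characteristic polynomial. -/
lemma charpoly_units_conj' {m : ℕ} (u : GL (Fin m) ℂ) (A : Matrix (Fin m) (Fin m) ℂ) :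
    ((↑u⁻¹ : Matrix (Fin m) (Fin m) ℂ) * A * (↑u : Matrix (Fin m) (Fin m) ℂ)).charpoly
      = A.charpoly := by
  have hmul : (↑u⁻¹ : Matrix (Fin m) (Fin m) ℂ) * (↑u : Matrix (Fin m) (Fin m) ℂ) = 1 :=
    u.inv_mul
  have hs : (Matrix.scalar (Fin m) (X : ℂ[X])) = (X : ℂ[X]) • (1 : Matrix (Fin m) (Fin m) ℂ[X]) := by
    ext i j
    rcases eq_or_ne i j with rfl | hij
    · simp
    · simp [Matrix.scalar_apply, Matrix.one_apply_ne hij, Matrix.diagonal_apply_ne _ hij]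
  have key : charmatrix ((↑u⁻¹ : Matrix (Fin m) (Fin m) ℂ) * A * (↑u : Matrix (Fin m) (Fin m) ℂ))
      = ((C : ℂ →+* ℂ[X]).mapMatrix (↑u⁻¹ : Matrix (Fin m) (Fin m) ℂ)) * charmatrix A *
        ((C : ℂ →+* ℂ[X]).mapMatrix (↑u : Matrix (Fin m) (Fin m) ℂ)) := by
    rw [charmatrix, charmatrix, Matrix.mul_sub, Matrix.sub_mul]
    congr 1
    · rw [hs, Matrix.mul_smul, Matrix.mul_one, Matrix.smul_mul, ← RingHom.map_mul, hmul,
        RingHom.map_one]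
    · rw [← RingHom.map_mul, ← RingHom.map_mul, Matrix.mul_assoc]
  unfold Matrix.charpoly
  rw [key, Matrix.det_mul, Matrix.det_mul]
  have : ((C : ℂ →+* ℂ[X]).mapMatrix (↑u⁻¹ : Matrix (Fin m) (Fin m) ℂ)).det *
      ((C : ℂ →+* ℂ[X]).mapMatrix (↑u : Matrix (Fin m) (Fin m) ℂ)).det = 1 := by
    rw [← Matrix.det_mul, ← RingHom.map_mul, hmul, RingHom.map_one, Matrix.det_one]
  calc ((C : ℂ →+* ℂ[X]).mapMatrix (↑u⁻¹ : Matrix (Fin m) (Fin m) ℂ)).det *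
        (charmatrix A).det * ((C : ℂ →+* ℂ[X]).mapMatrix (↑u : Matrix (Fin m) (Fin m) ℂ)).det
      = (((C : ℂ →+* ℂ[X]).mapMatrix (↑u⁻¹ : Matrix (Fin m) (Fin m) ℂ)).det *
        ((C : ℂ →+* ℂ[X]).mapMatrix (↑u : Matrix (Fin m) (Fin m) ℂ)).det) *
        (charmatrix A).det := by ring
    _ = (charmatrix A).det := by rw [this, one_mul]

open Matrix in
/-- If `A` has one-dimensional eigenspaces and `u⁻¹ A u` is diagonal, then the diagonal
entries of `u⁻¹ A u` are pairwise distinct. -/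
lemma diag_inj_of_oneDimEig {m : ℕ} (A : Matrix (Fin m) (Fin m) ℂ) (hA : OneDimEig A)
    (u : GL (Fin m) ℂ)
    (hu : Matrix.IsDiag ((↑u⁻¹ : Matrix (Fin m) (Fin m) ℂ) * A * (↑u : Matrix (Fin m) (Fin m) ℂ))) :
    Function.Injective
      (fun i => ((↑u⁻¹ : Matrix (Fin m) (Fin m) ℂ) * A * (↑u : Matrix (Fin m) (Fin m) ℂ)) i i) := by
  set D := (↑u⁻¹ : Matrix (Fin m) (Fin m) ℂ) * A * (↑u : Matrix (Fin m) (Fin m) ℂ) with hD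
  intro i j hij
  by_contra hne
  set μ : ℂ := D i i with hμ
  have hinv : (↑u⁻¹ : Matrix (Fin m) (Fin m) ℂ) * (↑u : Matrix (Fin m) (Fin m) ℂ) = 1 := u.inv_mul
  have hinv' : (↑u : Matrix (Fin m) (Fin m) ℂ) * (↑u⁻¹ : Matrix (Fin m) (Fin m) ℂ) = 1 := u.mul_inv
  have huD : (↑u : Matrix (Fin m) (Fin m) ℂ) * D = A * (↑u : Matrix (Fin m) (Fin m) ℂ) := by
    rw [hD, ← Matrix.mul_assoc, ← Matrix.mul_assoc, hinv', Matrix.one_mul]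
  -- the columns `u e_i`, `u e_j` lie in the kernel of `A - μ•1`
  have hker : ∀ k : Fin m, D k k = μ →
      (A - μ • 1).mulVec ((↑u : Matrix (Fin m) (Fin m) ℂ).mulVec (Pi.single k 1)) = 0 := by
    intro k hk
    have h1 : (A - μ • 1) * (↑u : Matrix (Fin m) (Fin m) ℂ)
        = (↑u : Matrix (Fin m) (Fin m) ℂ) * (D - μ • 1) := by
      rw [Matrix.sub_mul, Matrix.mul_sub, huD]
      congr 1
      rw [Matrix.smul_mul, Matrix.mul_smul, Matrix.one_mul, Matrix.mul_one]
    have h2 : (D - μ • 1).mulVec (Pi.single k 1) = 0 := by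
      funext l
      rw [Matrix.mulVec_single]
      rcases eq_or_ne l k with rfl | hlk
      · simp [hk]
      · simp [Matrix.sub_apply, hu hlk, Matrix.one_apply_ne hlk]
    rw [Matrix.mulVec_mulVec, h1, ← Matrix.mulVec_mulVec, h2, Matrix.mulVec_zero]
  have huinj : Function.Injective ((↑u : Matrix (Fin m) (Fin m) ℂ).mulVec) := by
    intro x y hxy
    have := congrArg ((↑u⁻¹ : Matrix (Fin m) (Fin m) ℂ).mulVec) hxy
    rwa [Matrix.mulVec_mulVec, Matrix.mulVec_mulVec, hinv, Matrix.one_mulVec,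
      Matrix.one_mulVec] at this
  set K := LinearMap.ker (Matrix.toLin' (A - μ • 1)) with hK
  have hmem : ∀ k : Fin m, D k k = μ →
      (↑u : Matrix (Fin m) (Fin m) ℂ).mulVec (Pi.single k 1) ∈ K := by
    intro k hk
    rw [hK, LinearMap.mem_ker, Matrix.toLin'_apply]
    exact hker k hk
  have hjj : D j j = μ := hij.symm
  -- K is nonzero
  have hne0 : ∀ k : Fin m, (↑u : Matrix (Fin m) (Fin m) ℂ).mulVec (Pi.single k 1) ≠ 0 := by
    intro k hk0
    have : (Pi.single k 1 : Fin m → ℂ) = 0 := by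
      apply huinj
      rw [hk0, Matrix.mulVec_zero]
    have := congrFun this k
    simp at this
  have hKne : K ≠ ⊥ := by
    intro hbot
    have := hmem i rfl
    rw [hbot, Submodule.mem_bot] at this
    exact hne0 i this
  have hdim : Module.finrank ℂ K = 1 := hA μ hKne
  -- but K contains two linearly independent vectors
  have hsind : LinearIndependent ℂ (fun k : Fin m => (Pi.single k 1 : Fin m → ℂ)) := by
    have e : (fun k : Fin m => (Pi.single k 1 : Fin m → ℂ)) = ⇑(Pi.basisFun ℂ (Fin m)) := by
      funext k; simp
    rw [e]
    exact (Pi.basisFun ℂ (Fin m)).linearIndependent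
  have hIJinj : Function.Injective (![i, j] : Fin 2 → Fin m) := by
    intro a b hab
    fin_cases a <;> fin_cases b <;> simp_all
  have hind2 : LinearIndependent ℂ
      (fun k : Fin 2 => (↑u : Matrix (Fin m) (Fin m) ℂ).mulVec (Pi.single (![i, j] k) 1)) := by
    have h1 : LinearIndependent ℂ (fun k : Fin 2 => (Pi.single (![i, j] k) 1 : Fin m → ℂ)) :=
      hsind.comp _ hIJinj
    have h2 := h1.map' ((↑u : Matrix (Fin m) (Fin m) ℂ).mulVecLin)
      (LinearMap.ker_eq_bot.2 (fun x y hxy => huinj (by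
        simpa [Matrix.mulVecLin_apply] using hxy)))
    have e2 : (⇑((↑u : Matrix (Fin m) (Fin m) ℂ).mulVecLin) ∘
        fun k : Fin 2 => (Pi.single (![i, j] k) 1 : Fin m → ℂ))
        = fun k : Fin 2 => (↑u : Matrix (Fin m) (Fin m) ℂ).mulVec (Pi.single (![i, j] k) 1) := by
      funext k; simp [Matrix.mulVecLin_apply]
    rwa [e2] at h2
  set v : Fin 2 → K := fun k => ⟨(↑u : Matrix (Fin m) (Fin m) ℂ).mulVec (Pi.single (![i, j] k) 1),
    by fin_cases k <;> [exact hmem i rfl; exact hmem j hjj]⟩ with hv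
  have hvind : LinearIndependent ℂ v := by
    apply LinearIndependent.of_comp (K.subtype)
    exact hind2
  have := hvind.fintype_card_le_finrank
  rw [hdim] at this
  simp at this

/-- The key triangular intertwining lemma. -/
lemma isUpper_of_intertwine {m : ℕ} {d : Fin m → ℂ} (hd : Function.Injective d)
    (U U' C : Matrix (Fin m) (Fin m) ℂ) (hU : IsUpper U) (hU' : IsUpper U')
    (hUd : ∀ i, U i i = d i) (hU'd : ∀ i, U' i i = d i)
    (hC : C * U' = U * C) : IsUpper C := by
  have key : ∀ i j : Fin m, (∑ k, C i k * U' k j) = ∑ k, U i k * C k j := by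
    intro i j
    have := congrFun (congrFun hC i) j
    simpa [Matrix.mul_apply] using this
  suffices H : ∀ t : ℕ, ∀ i j : Fin m, j < i → m - ((i : ℕ) - (j : ℕ)) ≤ t → C i j = 0 by
    intro i j hji
    exact H m i j hji (Nat.sub_le _ _)
  intro t
  induction t with
  | zero =>
    intro i j hji hle
    exfalso
    have hi := i.isLt
    have hj : (j : ℕ) < (i : ℕ) := hji
    omega
  | succ t ih =>
    intro i j hji hle
    have hi := i.isLt
    have hjlt : (j : ℕ) < (i : ℕ) := hji
    have hL : (∑ k, C i k * U' k j) = C i j * d j := by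
      rw [Finset.sum_eq_single j]
      · rw [hU'd]
      · intro k _ hk
        rcases lt_or_gt_of_ne hk with hkj | hkj
        · have : C i k = 0 := by
            apply ih i k (lt_trans hkj hji)
            have hk' : (k : ℕ) < (j : ℕ) := hkj
            omega
          rw [this, zero_mul]
        · rw [hU' k j hkj, mul_zero]
      · intro hj; exact absurd (Finset.mem_univ j) hj
    have hR : (∑ k, U i k * C k j) = d i * C i j := by
      rw [Finset.sum_eq_single i]
      · rw [hUd]
      · intro k _ hk
        rcases lt_or_gt_of_ne hk with hki | hki
        · -- k < i : U i k = 0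
          rw [hU i k hki, zero_mul]
        · -- i < k : C k j = 0 by induction
          have : C k j = 0 := by
            apply ih k j (lt_trans hji hki)
            have hk' := k.isLt
            have hik : (i : ℕ) < (k : ℕ) := hki
            omega
          rw [this, mul_zero]
      · intro hj; exact absurd (Finset.mem_univ i) hj
    have heq : C i j * d j = d i * C i j := by rw [← hL, ← hR, key]
    have hdd : d j ≠ d i := fun hdd => (ne_of_lt hji) (hd hdd)
    have : (d j - d i) * C i j = 0 := by linear_combination heq
    rcases mul_eq_zero.1 this with h0 | h0
    · exact absurd (sub_eq_zero.1 h0) hdd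
    · exact h0

open Matrix in
lemma isLower_of_intertwine {m : ℕ} {d : Fin m → ℂ} (hd : Function.Injective d)
    (L L' C : Matrix (Fin m) (Fin m) ℂ) (hL : IsLower L) (hL' : IsLower L')
    (hLd : ∀ i, L i i = d i) (hL'd : ∀ i, L' i i = d i)
    (hC : C * L' = L * C) : IsLower C := by
  have hT : Cᵀ * Lᵀ = L'ᵀ * Cᵀ := by
    rw [← Matrix.transpose_mul, ← Matrix.transpose_mul, hC]
  have := isUpper_of_intertwine hd L'ᵀ Lᵀ Cᵀ
    (fun i j hji => hL' j i hji) (fun i j hji => hL j i hji)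
    (fun i => hL'd i) (fun i => hLd i) hT
  intro i j hij
  exact this j i hij

open Matrix Polynomial in
lemma charpoly_of_lowerTriangular' {m : ℕ} (M : Matrix (Fin m) (Fin m) ℂ) (h : IsLower M) :
    M.charpoly = ∏ i, (X - C (M i i)) := by
  have hbt : M.BlockTriangular OrderDual.toDual := fun i j hij => h i j hij
  rw [Matrix.charpoly, Matrix.det_of_lowerTriangular _ hbt.charmatrix]
  simp

open Matrix Polynomial in
/-- If `A` is conjugate to a diagonal matrix, has one-dimensional eigenspaces, and its
characteristic polynomial is `∏ (X - d i)`, then `d` is injective. -/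
lemma diag_inj_of_charpoly {m : ℕ} (A : Matrix (Fin m) (Fin m) ℂ) (hA : OneDimEig A)
    (u : GL (Fin m) ℂ)
    (hu : Matrix.IsDiag ((↑u⁻¹ : Matrix (Fin m) (Fin m) ℂ) * A * (↑u : Matrix (Fin m) (Fin m) ℂ)))
    (d : Fin m → ℂ) (hc : A.charpoly = ∏ i, (X - C (d i))) :
    Function.Injective d := by
  set D := (↑u⁻¹ : Matrix (Fin m) (Fin m) ℂ) * A * (↑u : Matrix (Fin m) (Fin m) ℂ) with hD
  have hDinj : Function.Injective (fun i => D i i) := diag_inj_of_oneDimEig A hA u hu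
  have hDtri : D.BlockTriangular id := fun i j hij => hu (ne_of_gt hij)
  have hDc : D.charpoly = ∏ i, (X - C (D i i)) :=
    Matrix.charpoly_of_upperTriangular D hDtri
  have hprod : (∏ i, (X - C (d i))) = ∏ i, (X - C (D i i)) := by
    rw [← hc, ← hDc, hD, charpoly_units_conj']
  -- pass to roots
  have hroots : (Finset.univ.val.map d) = (Finset.univ.val.map (fun i => D i i)) := by
    have h1 : (Finset.univ.val.map d) =
        (((Finset.univ.val.map d)).map (fun a : ℂ => X - C a)).prod.roots :=
      (Polynomial.roots_multiset_prod_X_sub_C _).symm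
    have h2 : (Finset.univ.val.map (fun i => D i i)) =
        (((Finset.univ.val.map (fun i => D i i))).map (fun a : ℂ => X - C a)).prod.roots :=
      (Polynomial.roots_multiset_prod_X_sub_C _).symm
    rw [h1, h2]
    congr 1
    rw [Multiset.map_map, Multiset.map_map]
    simpa [Finset.prod_eq_multiset_prod, Function.comp] using hprod
  have hnodup : (Finset.univ.val.map d).Nodup := by
    rw [hroots]
    exact Finset.univ.nodup.map_on (fun x _ y _ hxy => hDinj hxy)
  intro i j hij
  exact Multiset.inj_on_of_nodup_map hnodup i (Finset.mem_univ i) j (Finset.mem_univ j) hij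

/-- for diagonalizable `A`, `B` with one-dimensional eigenspaces, a basis
in which `A` is upper-triangular and `B` is lower-triangular with prescribed diagonal
orders is unique up to an invertible diagonal transformation. -/
theorem common_triangularizing_basis_unique {m : ℕ}
    (A B : Matrix (Fin m) (Fin m) ℂ)
    (hA : OneDimEig A) (hB : OneDimEig B)
    (hAd : ∃ u : GL (Fin m) ℂ,
      Matrix.IsDiag ((↑u⁻¹ : Matrix (Fin m) (Fin m) ℂ) * A * (↑u : Matrix (Fin m) (Fin m) ℂ)))
    (hBd : ∃ u : GL (Fin m) ℂ,
      Matrix.IsDiag ((↑u⁻¹ : Matrix (Fin m) (Fin m) ℂ) * B * (↑u : Matrix (Fin m) (Fin m) ℂ)))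
    (dA dB : Fin m → ℂ) (g h : GL (Fin m) ℂ)
    (hg₁ : IsUpper ((↑g⁻¹ : Matrix (Fin m) (Fin m) ℂ) * A * (↑g : Matrix (Fin m) (Fin m) ℂ)))
    (hg₂ : ∀ i, ((↑g⁻¹ : Matrix (Fin m) (Fin m) ℂ) * A * (↑g : Matrix (Fin m) (Fin m) ℂ)) i i = dA i)
    (hg₃ : IsLower ((↑g⁻¹ : Matrix (Fin m) (Fin m) ℂ) * B * (↑g : Matrix (Fin m) (Fin m) ℂ)))
    (hg₄ : ∀ i, ((↑g⁻¹ : Matrix (Fin m) (Fin m) ℂ) * B * (↑g : Matrix (Fin m) (Fin m) ℂ)) i i = dB i)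
    (hh₁ : IsUpper ((↑h⁻¹ : Matrix (Fin m) (Fin m) ℂ) * A * (↑h : Matrix (Fin m) (Fin m) ℂ)))
    (hh₂ : ∀ i, ((↑h⁻¹ : Matrix (Fin m) (Fin m) ℂ) * A * (↑h : Matrix (Fin m) (Fin m) ℂ)) i i = dA i)
    (hh₃ : IsLower ((↑h⁻¹ : Matrix (Fin m) (Fin m) ℂ) * B * (↑h : Matrix (Fin m) (Fin m) ℂ)))
    (hh₄ : ∀ i, ((↑h⁻¹ : Matrix (Fin m) (Fin m) ℂ) * B * (↑h : Matrix (Fin m) (Fin m) ℂ)) i i = dB i) :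
    Matrix.IsDiag ((↑g⁻¹ : Matrix (Fin m) (Fin m) ℂ) * (↑h : Matrix (Fin m) (Fin m) ℂ)) := by
  obtain ⟨u, hu⟩ := hAd
  obtain ⟨w, hw⟩ := hBd
  have hdA : Function.Injective dA := by
    apply diag_inj_of_charpoly A hA u hu dA
    have hUtri : ((↑g⁻¹ : Matrix (Fin m) (Fin m) ℂ) * A *
        (↑g : Matrix (Fin m) (Fin m) ℂ)).BlockTriangular id := fun i j hij => hg₁ i j hij
    calc A.charpoly = ((↑g⁻¹ : Matrix (Fin m) (Fin m) ℂ) * A *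
            (↑g : Matrix (Fin m) (Fin m) ℂ)).charpoly := (charpoly_units_conj' g A).symm
      _ = ∏ i, (Polynomial.X - Polynomial.C (((↑g⁻¹ : Matrix (Fin m) (Fin m) ℂ) * A *
            (↑g : Matrix (Fin m) (Fin m) ℂ)) i i)) :=
          Matrix.charpoly_of_upperTriangular _ hUtri
      _ = ∏ i, (Polynomial.X - Polynomial.C (dA i)) :=
          Finset.prod_congr rfl fun i _ => by rw [hg₂]
  have hdB : Function.Injective dB := by
    apply diag_inj_of_charpoly B hB w hw dB
    calc B.charpoly = ((↑g⁻¹ : Matrix (Fin m) (Fin m) ℂ) * B *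
            (↑g : Matrix (Fin m) (Fin m) ℂ)).charpoly := (charpoly_units_conj' g B).symm
      _ = ∏ i, (Polynomial.X - Polynomial.C (((↑g⁻¹ : Matrix (Fin m) (Fin m) ℂ) * B *
            (↑g : Matrix (Fin m) (Fin m) ℂ)) i i)) :=
          charpoly_of_lowerTriangular' _ hg₃
      _ = ∏ i, (Polynomial.X - Polynomial.C (dB i)) :=
          Finset.prod_congr rfl fun i _ => by rw [hg₄]
  set C := (↑g⁻¹ : Matrix (Fin m) (Fin m) ℂ) * (↑h : Matrix (Fin m) (Fin m) ℂ) with hCdef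
  have hginv : (↑g : Matrix (Fin m) (Fin m) ℂ) * (↑g⁻¹ : Matrix (Fin m) (Fin m) ℂ) = 1 := g.mul_inv
  have hhinv : (↑h : Matrix (Fin m) (Fin m) ℂ) * (↑h⁻¹ : Matrix (Fin m) (Fin m) ℂ) = 1 := h.mul_inv
  have hCA : C * ((↑h⁻¹ : Matrix (Fin m) (Fin m) ℂ) * A * (↑h : Matrix (Fin m) (Fin m) ℂ))
      = ((↑g⁻¹ : Matrix (Fin m) (Fin m) ℂ) * A * (↑g : Matrix (Fin m) (Fin m) ℂ)) * C := by
    rw [hCdef]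
    calc (↑g⁻¹ : Matrix (Fin m) (Fin m) ℂ) * ↑h *
          ((↑h⁻¹ : Matrix (Fin m) (Fin m) ℂ) * A * ↑h)
        = (↑g⁻¹ : Matrix (Fin m) (Fin m) ℂ) * (↑h * ↑h⁻¹) * A * ↑h := by
          simp only [Matrix.mul_assoc]
      _ = (↑g⁻¹ : Matrix (Fin m) (Fin m) ℂ) * A * ↑h := by rw [hhinv, Matrix.mul_one]
      _ = (↑g⁻¹ : Matrix (Fin m) (Fin m) ℂ) * A * (↑g * ↑g⁻¹) * ↑h := by
          rw [hginv, Matrix.mul_one]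
      _ = (↑g⁻¹ : Matrix (Fin m) (Fin m) ℂ) * A * ↑g * ((↑g⁻¹ : Matrix (Fin m) (Fin m) ℂ) * ↑h) := by
          simp only [Matrix.mul_assoc]
  have hCB : C * ((↑h⁻¹ : Matrix (Fin m) (Fin m) ℂ) * B * (↑h : Matrix (Fin m) (Fin m) ℂ))
      = ((↑g⁻¹ : Matrix (Fin m) (Fin m) ℂ) * B * (↑g : Matrix (Fin m) (Fin m) ℂ)) * C := by
    rw [hCdef]
    calc (↑g⁻¹ : Matrix (Fin m) (Fin m) ℂ) * ↑h *
          ((↑h⁻¹ : Matrix (Fin m) (Fin m) ℂ) * B * ↑h)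
        = (↑g⁻¹ : Matrix (Fin m) (Fin m) ℂ) * (↑h * ↑h⁻¹) * B * ↑h := by
          simp only [Matrix.mul_assoc]
      _ = (↑g⁻¹ : Matrix (Fin m) (Fin m) ℂ) * B * ↑h := by rw [hhinv, Matrix.mul_one]
      _ = (↑g⁻¹ : Matrix (Fin m) (Fin m) ℂ) * B * (↑g * ↑g⁻¹) * ↑h := by
          rw [hginv, Matrix.mul_one]
      _ = (↑g⁻¹ : Matrix (Fin m) (Fin m) ℂ) * B * ↑g * ((↑g⁻¹ : Matrix (Fin m) (Fin m) ℂ) * ↑h) := by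
          simp only [Matrix.mul_assoc]
  have hCu : IsUpper C :=
    isUpper_of_intertwine hdA _ _ C hg₁ hh₁ hg₂ hh₂ hCA
  have hCl : IsLower C :=
    isLower_of_intertwine hdB _ _ C hg₃ hh₃ hg₄ hh₄ hCB
  intro i j hij
  rcases lt_or_gt_of_ne hij with hlt | hlt
  · exact hCl i j hlt
  · exact hCu i j hlt
end

section
/- Let A be an m×m complex matrix with all eigenspaces one-dimensional, having the all-ones vector as an eigenvector with eigenvalue λ. Let Â be the (m-1)×(m-1) block obtained by conjugating by Ξ and deleting the last row and column. Then all eigenspaces of Â are also one-dimensional. -/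
def Xi (m : ℕ) : Matrix (Fin (m + 1)) (Fin (m + 1)) ℂ :=
  fun i j => if j = Fin.last m then 1 else if i = j then 1 else 0

open Matrix

/-- the dot-product-with-`a` functional, as a linear map. -/
noncomputable def dotL {m : ℕ} (a : Fin m → ℂ) : (Fin m → ℂ) →ₗ[ℂ] ℂ :=
  ∑ k, a k • LinearMap.proj k

lemma dotL_apply {m : ℕ} (a v : Fin m → ℂ) : dotL a v = ∑ k, a k * v k := by
  simp [dotL]

/-- append a `0`, as a linear map. -/
noncomputable def snocL (m : ℕ) : (Fin m → ℂ) →ₗ[ℂ] (Fin (m + 1) → ℂ) :=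
  LinearMap.pi (Fin.lastCases 0 LinearMap.proj)

lemma snocL_castSucc {m : ℕ} (v : Fin m → ℂ) (j : Fin m) :
    snocL m v j.castSucc = v j := by
  simp [snocL, LinearMap.pi_apply]

lemma snocL_last {m : ℕ} (v : Fin m → ℂ) : snocL m v (Fin.last m) = 0 := by
  simp [snocL, LinearMap.pi_apply]

lemma oneDimEig_conj {n : ℕ} (P A : Matrix (Fin n) (Fin n) ℂ) (hP : IsUnit P.det)
    (hA : OneDimEig A) : OneDimEig (P⁻¹ * A * P) := by
  have hPinv : Invertible P := P.invertibleOfIsUnitDet hP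
  set e := P.toLinearEquiv' hPinv with he
  have hkerPinv : LinearMap.ker (Matrix.toLin' P⁻¹) = ⊥ := by
    rw [LinearMap.ker_eq_bot]
    intro x y hxy
    have h2 : P *ᵥ (P⁻¹ *ᵥ x) = P *ᵥ (P⁻¹ *ᵥ y) := by
      simpa [Matrix.toLin'_apply] using congrArg (Matrix.toLin' P) hxy
    simpa [Matrix.mulVec_mulVec, Matrix.mul_nonsing_inv P hP, Matrix.one_mulVec] using h2
  intro μ hne
  have h1 : P⁻¹ * A * P - μ • 1 = P⁻¹ * ((A - μ • 1) * P) := by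
    rw [Matrix.sub_mul, Matrix.mul_sub, Matrix.smul_mul, Matrix.one_mul, Matrix.mul_smul,
      Matrix.nonsing_inv_mul P hP, Matrix.mul_assoc]
  have hker : LinearMap.ker (Matrix.toLin' (P⁻¹ * A * P - μ • 1)) =
      Submodule.map (e.symm : (Fin n → ℂ) →ₗ[ℂ] (Fin n → ℂ))
        (LinearMap.ker (Matrix.toLin' (A - μ • 1))) := by
    rw [h1, Matrix.toLin'_mul, LinearMap.ker_comp_of_ker_eq_bot _ hkerPinv,
      Matrix.toLin'_mul, LinearMap.ker_comp,
      ← Submodule.comap_equiv_eq_map_symm e (LinearMap.ker (Matrix.toLin' (A - μ • 1)))]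
    congr 1
  rw [hker] at hne ⊢
  rw [LinearEquiv.finrank_map_eq e.symm]
  apply hA
  intro hbot
  exact hne (by rw [hbot, Submodule.map_bot])

/-- if all eigenspaces of `A` are one-dimensional and the all-ones vector
is an eigenvector of `A` with eigenvalue `λ`, then all eigenspaces of the upper-left
block `Â` of `Ξ⁻¹AΞ` are one-dimensional as well. -/
theorem block_one_dim_eigenspaces {m : ℕ} (A : Matrix (Fin (m + 1)) (Fin (m + 1)) ℂ)
    (lam : ℂ) (h : A.mulVec (fun _ => 1) = (fun _ => lam : Fin (m + 1) → ℂ))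
    (hA : OneDimEig A) :
    OneDimEig (((Xi m)⁻¹ * A * Xi m).submatrix Fin.castSucc Fin.castSucc) := by
  set Ξ := Xi m with hΞdef
  have hdet : IsUnit Ξ.det := by
    have hbt : Ξ.BlockTriangular id := by
      intro i j hij
      have hj : j ≠ Fin.last m := by
        intro hj
        rw [hj] at hij
        exact absurd hij (not_lt.mpr (Fin.le_last i))
      have hij' : i ≠ j := (ne_of_gt hij)
      simp [hΞdef, Xi, hj, hij']
    have : Ξ.det = 1 := by
      rw [Matrix.det_of_upperTriangular hbt]
      apply Finset.prod_eq_one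
      intro i _
      by_cases hi : i = Fin.last m <;> simp [hΞdef, Xi, hi]
    rw [this]; exact isUnit_one
  set B := Ξ⁻¹ * A * Ξ with hBdef
  set Ah := B.submatrix Fin.castSucc Fin.castSucc with hAhdef
  have hB : OneDimEig B := oneDimEig_conj Ξ A hdet hA
  have hones : Ξ⁻¹ *ᵥ (fun _ => (1 : ℂ)) = Pi.single (Fin.last m) 1 := by
    have h1 : Ξ *ᵥ Pi.single (Fin.last m) (1 : ℂ) = fun _ => 1 := by
      rw [Matrix.mulVec_single]
      funext i
      simp [hΞdef, Xi]
    rw [← h1, Matrix.mulVec_mulVec, Matrix.nonsing_inv_mul Ξ hdet, Matrix.one_mulVec]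
  have hBlast : ∀ i, B i (Fin.last m) = if i = Fin.last m then lam else 0 := by
    intro i
    have h2 : B i (Fin.last m) = ((Ξ⁻¹ * A) *ᵥ (fun _ => 1)) i := by
      simp only [hBdef, Matrix.mul_apply, Matrix.mulVec, dotProduct]
      apply Finset.sum_congr rfl
      intro k _
      simp [hΞdef, Xi]
    rw [h2, ← Matrix.mulVec_mulVec, h]
    have h3 : (fun _ : Fin (m + 1) => lam) = lam • (fun _ => (1 : ℂ)) := by
      funext i; simp
    rw [h3, Matrix.mulVec_smul, hones]
    simp [Pi.single_apply]
  set a : Fin m → ℂ := fun k => B (Fin.last m) k.castSucc with hadef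
  -- row computations
  have key : ∀ (μ : ℂ) (w : Fin (m + 1) → ℂ) (j : Fin m),
      ((B - μ • 1) *ᵥ w) j.castSucc = ((Ah - μ • 1) *ᵥ (fun k => w k.castSucc)) j := by
    intro μ w j
    simp only [Matrix.mulVec, dotProduct]
    rw [Fin.sum_univ_castSucc]
    have hz : (B - μ • 1) j.castSucc (Fin.last m) = 0 := by
      simp [Matrix.sub_apply, hBlast, Matrix.smul_apply, Matrix.one_apply,
        (Fin.castSucc_lt_last j).ne]
    rw [hz, zero_mul, add_zero]
    apply Finset.sum_congr rfl
    intro k _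
    congr 1
    simp [hAhdef, Matrix.sub_apply, Matrix.submatrix_apply, Matrix.smul_apply,
      Matrix.one_apply, Fin.castSucc_inj]
  have keyLast : ∀ (μ : ℂ) (w : Fin (m + 1) → ℂ),
      ((B - μ • 1) *ᵥ w) (Fin.last m) =
        (∑ k, a k * w k.castSucc) + (lam - μ) * w (Fin.last m) := by
    intro μ w
    simp only [Matrix.mulVec, dotProduct]
    rw [Fin.sum_univ_castSucc]
    congr 1
    · apply Finset.sum_congr rfl
      intro k _
      congr 1
      simp [hadef, Matrix.sub_apply, Matrix.smul_apply, Matrix.one_apply,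
        (Fin.castSucc_lt_last k).ne']
    · have : (B - μ • 1) (Fin.last m) (Fin.last m) = lam - μ := by
        simp [Matrix.sub_apply, hBlast, Matrix.smul_apply, Matrix.one_apply]
      rw [this, mul_comm]
  intro μ hne
  obtain ⟨v, hv, hv0⟩ := (Submodule.ne_bot_iff _).mp hne
  have hvker : (Ah - μ • 1) *ᵥ v = 0 := by
    rwa [LinearMap.mem_ker, Matrix.toLin'_apply] at hv
  have hle : Module.finrank ℂ (LinearMap.ker (Matrix.toLin' (Ah - μ • 1))) ≤ 1 := by
    by_cases hμ : μ = lam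
    · -- eigenvalue of the all-ones vector: use the functional v ↦ aᵀv
      subst hμ
      -- e_last is an eigenvector of B
      have hel : Pi.single (Fin.last m) (1 : ℂ) ∈ LinearMap.ker (Matrix.toLin' (B - μ • 1)) := by
        rw [LinearMap.mem_ker, Matrix.toLin'_apply, Matrix.mulVec_single]
        funext i
        by_cases hi : i = Fin.last m <;>
          simp [Matrix.sub_apply, hBlast, Matrix.smul_apply, Matrix.one_apply, hi]
      have hel0 : (⟨_, hel⟩ : LinearMap.ker (Matrix.toLin' (B - μ • 1))) ≠ 0 := by
        intro h0
        have := congrFun (congrArg Subtype.val h0) (Fin.last m)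
        simp at this
      have hne' : LinearMap.ker (Matrix.toLin' (B - μ • 1)) ≠ ⊥ := by
        intro hbot
        exact hel0 (Subtype.ext ((Submodule.mem_bot ℂ).mp (hbot ▸ hel)))
      have h1 : Module.finrank ℂ (LinearMap.ker (Matrix.toLin' (B - μ • 1))) = 1 := hB μ hne'
      -- injectivity of the functional on the kernel
      have hinj : ∀ x ∈ LinearMap.ker (Matrix.toLin' (Ah - μ • 1)),
          dotL a x = 0 → x = 0 := by
        intro x hx hdot
        rw [dotL_apply] at hdot
        have hxker : (Ah - μ • 1) *ᵥ x = 0 := by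
          rwa [LinearMap.mem_ker, Matrix.toLin'_apply] at hx
        have hsx : (fun k => snocL m x k.castSucc) = x := funext fun k => snocL_castSucc x k
        have hw : snocL m x ∈ LinearMap.ker (Matrix.toLin' (B - μ • 1)) := by
          rw [LinearMap.mem_ker, Matrix.toLin'_apply]
          funext i
          refine Fin.lastCases ?_ ?_ i
          · rw [keyLast]
            simp only [snocL_last, snocL_castSucc]
            rw [hdot]; ring_nf; rfl
          · intro j
            rw [key, hsx, hxker]
            rfl
        obtain ⟨c, hc⟩ := (finrank_eq_one_iff_of_nonzero' _ hel0).mp h1 ⟨snocL m x, hw⟩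
        have hc' : c • (Pi.single (Fin.last m) 1 : Fin (m + 1) → ℂ) = snocL m x := by
          simpa using congrArg Subtype.val hc
        funext j
        have h5 := congrFun hc' j.castSucc
        simp only [Pi.smul_apply, snocL_castSucc, Pi.single_apply,
          (Fin.castSucc_lt_last j).ne, if_false, smul_zero] at h5
        exact h5.symm
      have hfinj : Function.Injective
          ((dotL a).comp (Submodule.subtype (LinearMap.ker (Matrix.toLin' (Ah - μ • 1))))) := by
        rw [← LinearMap.ker_eq_bot]
        rw [Submodule.eq_bot_iff]
        intro y hy
        exact Subtype.ext (hinj y.1 y.2 hy)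
      have := LinearMap.finrank_le_finrank_of_injective hfinj
      simpa using this
    · -- μ ≠ lam : extend eigenvectors of Ah to eigenvectors of B
      set E : (Fin m → ℂ) →ₗ[ℂ] (Fin (m + 1) → ℂ) :=
        snocL m + (((μ - lam)⁻¹ • dotL a).smulRight ((Pi.single (Fin.last m) 1 : Fin (m + 1) → ℂ))) with hEdef
      have hElast : ∀ x, E x (Fin.last m) = (μ - lam)⁻¹ * dotL a x := by
        intro x
        simp [hEdef, snocL_last, LinearMap.smulRight_apply, Pi.single_apply]
      have hEcast : ∀ x (j : Fin m), E x j.castSucc = x j := by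
        intro x j
        simp [hEdef, snocL_castSucc, LinearMap.smulRight_apply, Pi.single_apply,
          (Fin.castSucc_lt_last j).ne]
      have hmem : ∀ x ∈ LinearMap.ker (Matrix.toLin' (Ah - μ • 1)),
          E x ∈ LinearMap.ker (Matrix.toLin' (B - μ • 1)) := by
        intro x hx
        have hxker : (Ah - μ • 1) *ᵥ x = 0 := by
          rwa [LinearMap.mem_ker, Matrix.toLin'_apply] at hx
        rw [LinearMap.mem_ker, Matrix.toLin'_apply]
        funext i
        refine Fin.lastCases ?_ ?_ i
        · rw [keyLast]
          have h6 : ∀ k : Fin m, E x k.castSucc = x k := hEcast x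
          simp only [h6, hElast, dotL_apply]
          have hμl : μ - lam ≠ 0 := sub_ne_zero.mpr (fun hh => hμ hh)
          field_simp
          simp only [Pi.zero_apply]
          ring
        · intro j
          have h7 : (fun k => E x k.castSucc) = x := funext fun k => hEcast x k
          rw [key, h7, hxker]
          rfl
      have hEinj : ∀ x ∈ LinearMap.ker (Matrix.toLin' (Ah - μ • 1)), E x = 0 → x = 0 := by
        intro x _ hx0
        funext j
        have := congrFun hx0 j.castSucc
        rwa [hEcast] at this
      -- ker (B - μ) is nontrivial
      have hne' : LinearMap.ker (Matrix.toLin' (B - μ • 1)) ≠ ⊥ := by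
        intro hbot
        have h8 : E v ∈ LinearMap.ker (Matrix.toLin' (B - μ • 1)) := hmem v hv
        rw [hbot, Submodule.mem_bot] at h8
        exact hv0 (hEinj v hv h8)
      have h1 : Module.finrank ℂ (LinearMap.ker (Matrix.toLin' (B - μ • 1))) = 1 := hB μ hne'
      have hf : Function.Injective
          (E.restrict (p := LinearMap.ker (Matrix.toLin' (Ah - μ • 1)))
            (q := LinearMap.ker (Matrix.toLin' (B - μ • 1))) hmem) := by
        rw [← LinearMap.ker_eq_bot, Submodule.eq_bot_iff]
        intro y hy
        have : E y.1 = 0 := by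
          have := congrArg Subtype.val hy
          simpa [LinearMap.restrict_apply] using this
        exact Subtype.ext (hEinj y.1 y.2 this)
      have := LinearMap.finrank_le_finrank_of_injective hf
      omega
  have hpos : 0 < Module.finrank ℂ (LinearMap.ker (Matrix.toLin' (Ah - μ • 1))) := by
    have : Nontrivial (LinearMap.ker (Matrix.toLin' (Ah - μ • 1))) :=
      Submodule.nontrivial_iff_ne_bot.mpr hne
    exact Module.finrank_pos
  omega
end
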